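/- arXiv:2402.16166 — 3 statements merged into one kernel-verified Lean document; each statement's English description precedes it below -/
import Mathlib

section
/- With the unicyclic/tree setup and z_0 a leaf of highest level with level(z_0) ≥ 2, write N(y_0) = {z_0, z_1, …, z_s} ∪ {x_0} where y_0 is the unique neighbor of z_0, z_1,…,z_s are leaves, and x_0 is the unique non-leaf neighbor of y_0. Then ν_3(G) = max{ν_3(G_{z_0,1}), 1 + ν_3(G_{z_0,2})} if s ≥ 1, and ν_3(G) = max{ν_3(G_{z_0,1}), 1 + ν_3(G_{z_0,3})} if s = 0. -/
noncomputable section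

namespace PathIdeals

open MvPolynomial

variable {k : Type*} [Field k] {V : Type*} [Fintype V] [LinearOrder V]

/-- Transport a graded piece along an equality of degrees. -/
def castLinear (k : Type*) [Field k] (N : ℕ → Type*) [∀ a, AddCommGroup (N a)]
    [∀ a, Module k (N a)] {a b : ℕ} (h : a = b) : N a →ₗ[k] N b := by
  subst h; exact LinearMap.id

/-- The Koszul-type differential computing `Tor^S(k, N)` for a graded module `N` over
`S = k[x_v : v ∈ V]` given by its graded pieces `N a` together with the multiplication maps
`x_v ⬝ : N a → N (a+1)`.  The map goes from homological degree `i`, internal degree `j`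
(so coefficients in `N (j - i)`) to homological degree `i - 1`. -/
def koszulMap (k : Type*) [Field k] {V : Type*} [Fintype V] [LinearOrder V]
    (N : ℕ → Type*) [∀ a, AddCommGroup (N a)] [∀ a, Module k (N a)]
    (mul : V → ∀ a : ℕ, N a →ₗ[k] N (a + 1)) (i j : ℕ) :
    ({s : Finset V // s.card = i} →₀ N (j - i)) →ₗ[k]
      ({s : Finset V // s.card = i - 1} →₀ N (j - (i - 1))) :=
  if h : 1 ≤ i ∧ i ≤ j then
    Finsupp.lsum k fun s : {s : Finset V // s.card = i} =>
      ∑ v ∈ s.1.attach,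
        ((-1 : k) ^ (s.1.filter (fun w => w < v.1)).card) •
          ((Finsupp.lsingle
              (⟨s.1.erase v.1, by rw [Finset.card_erase_of_mem v.2, s.2]⟩ :
                {s : Finset V // s.card = i - 1})).comp
            ((castLinear k N (by omega : (j - i) + 1 = j - (i - 1))).comp (mul v.1 (j - i))))
  else 0

/-- The `(i,j)`-th graded Betti number `β_{i,j} = dim_k Tor_i^S(k, N)_j` of the graded module
`N`, computed as the dimension of the homology of the Koszul complex tensored with `N`.
(For modules generated in non-negative degrees, such as ideals and their quotient rings,
the Betti numbers vanish when `j < i`.) -/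
def bettiAux (k : Type*) [Field k] {V : Type*} [Fintype V] [LinearOrder V]
    (N : ℕ → Type*) [∀ a, AddCommGroup (N a)] [∀ a, Module k (N a)]
    (mul : V → ∀ a : ℕ, N a →ₗ[k] N (a + 1)) (i j : ℕ) : ℕ :=
  if j < i then 0
  else
    Module.finrank k
      (↥(LinearMap.ker (koszulMap k N mul i j)) ⧸
        Submodule.comap (LinearMap.ker (koszulMap k N mul i j)).subtype
          (LinearMap.range (koszulMap k N mul (i + 1) j)))

/-- The degree-`a` graded piece of a homogeneous ideal `I ⊆ S`, as a `k`-subspace. -/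
def idealPiece (k : Type*) [Field k] {V : Type*} (I : Ideal (MvPolynomial V k)) (a : ℕ) :
    Submodule k (MvPolynomial V k) :=
  Submodule.restrictScalars k I ⊓ homogeneousSubmodule V k a

/-- Multiplication by the variable `x_v` on graded pieces of an ideal. -/
def idealMul {k : Type*} [Field k] {V : Type*} (I : Ideal (MvPolynomial V k)) (v : V) (a : ℕ) :
    ↥(idealPiece k I a) →ₗ[k] ↥(idealPiece k I (a + 1)) where
  toFun f := ⟨X v * f.1, by
    obtain ⟨h1, h2⟩ := Submodule.mem_inf.mp f.2
    refine Submodule.mem_inf.mpr ⟨I.mul_mem_left _ h1, ?_⟩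
    rw [mem_homogeneousSubmodule] at h2 ⊢
    simpa [add_comm] using (isHomogeneous_X k v).mul h2⟩
  map_add' f g := by ext; simp [mul_add]
  map_smul' c f := by ext; simp [mul_smul_comm]

/-- The `(i,j)`-th graded Betti number `β_{i,j}(I) = dim_k Tor_i^S(k, I)_j` of a homogeneous
ideal `I` of the polynomial ring `S = k[x_v : v ∈ V]`. -/
def gradedBetti (k : Type*) [Field k] {V : Type*} [Fintype V] [LinearOrder V]
    (I : Ideal (MvPolynomial V k)) (i j : ℕ) : ℕ :=
  bettiAux k (fun a => ↥(idealPiece k I a)) (idealMul I) i j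

/-- The projective dimension `pd(I) = sup { i | β_{i,j}(I) ≠ 0 for some j }` of a homogeneous
ideal of the polynomial ring. -/
def pdIdeal (k : Type*) [Field k] {V : Type*} [Fintype V] [LinearOrder V]
    (I : Ideal (MvPolynomial V k)) : ℕ :=
  sSup {i | ∃ j, gradedBetti k I i j ≠ 0}

/-- The Castelnuovo–Mumford regularity `reg(I) = sup { j - i | β_{i,j}(I) ≠ 0 }` of a
homogeneous ideal of the polynomial ring. -/
def regIdeal (k : Type*) [Field k] {V : Type*} [Fintype V] [LinearOrder V]
    (I : Ideal (MvPolynomial V k)) : ℕ :=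
  sSup {r | ∃ i, gradedBetti k I i (i + r) ≠ 0}

/-- Multiplication by `x_v` on the (constant) ungraded module underlying an ideal. -/
def idealMulTotal {k : Type*} [Field k] {V : Type*} (I : Ideal (MvPolynomial V k)) (v : V)
    (_ : ℕ) : ↥(Submodule.restrictScalars k I) →ₗ[k] ↥(Submodule.restrictScalars k I) where
  toFun f := ⟨X v * f.1, I.mul_mem_left _ f.2⟩
  map_add' f g := by ext; simp [mul_add]
  map_smul' c f := by ext; simp [mul_smul_comm]

/-- The `i`-th total Betti number `β_i(I) = dim_k Tor_i^S(k, I)` of a homogeneous ideal of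
the polynomial ring, computed as the dimension of ungraded Koszul homology. -/
def totalBetti (k : Type*) [Field k] {V : Type*} [Fintype V] [LinearOrder V]
    (I : Ideal (MvPolynomial V k)) (i : ℕ) : ℕ :=
  bettiAux k (fun _ => ↥(Submodule.restrictScalars k I)) (idealMulTotal I) i (i + 1)

/-- `P = I + J` is a Betti splitting if `β_i(P) = β_i(I) + β_i(J) + β_{i-1}(I ∩ J)`
for all `i ≥ 0` (where `β_{-1} = 0`). -/
def IsBettiSplitting (k : Type*) [Field k] {V : Type*} [Fintype V] [LinearOrder V]
    (P I J : Ideal (MvPolynomial V k)) : Prop :=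
  P = I + J ∧ totalBetti k P 0 = totalBetti k I 0 + totalBetti k J 0 ∧
    ∀ i : ℕ, totalBetti k P (i + 1) =
      totalBetti k I (i + 1) + totalBetti k J (i + 1) + totalBetti k (I ⊓ J) i

/-- The subspace of the degree-`a` homogeneous component of `S` consisting of elements of a
homogeneous ideal `I`. -/
def quotSub (k : Type*) [Field k] {V : Type*} (I : Ideal (MvPolynomial V k)) (a : ℕ) :
    Submodule k ↥(homogeneousSubmodule V k a) :=
  Submodule.comap (homogeneousSubmodule V k a).subtype (Submodule.restrictScalars k I)

/-- The degree-`a` graded piece of the quotient ring `S/I`. -/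
def quotPiece (k : Type*) [Field k] {V : Type*} (I : Ideal (MvPolynomial V k)) (a : ℕ) :
    Type _ :=
  ↥(homogeneousSubmodule V k a) ⧸ quotSub k I a

instance (I : Ideal (MvPolynomial V k)) (a : ℕ) : AddCommGroup (quotPiece k I a) :=
  inferInstanceAs (AddCommGroup (↥(homogeneousSubmodule V k a) ⧸ quotSub k I a))

instance (I : Ideal (MvPolynomial V k)) (a : ℕ) : Module k (quotPiece k I a) :=
  inferInstanceAs (Module k (↥(homogeneousSubmodule V k a) ⧸ quotSub k I a))

/-- Multiplication by `x_v` on the homogeneous components of `S`. -/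
def homogMul (k : Type*) [Field k] {V : Type*} (v : V) (a : ℕ) :
    ↥(homogeneousSubmodule V k a) →ₗ[k] ↥(homogeneousSubmodule V k (a + 1)) where
  toFun f := ⟨X v * f.1, by
    have h2 := (mem_homogeneousSubmodule _ _).mp f.2
    rw [mem_homogeneousSubmodule]
    simpa [add_comm] using (isHomogeneous_X k v).mul h2⟩
  map_add' f g := by ext; simp [mul_add]
  map_smul' c f := by ext; simp [mul_smul_comm]

/-- Multiplication by `x_v` on graded pieces of the quotient ring `S/I`. -/
def quotMul {k : Type*} [Field k] {V : Type*} (I : Ideal (MvPolynomial V k)) (v : V) (a : ℕ) :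
    quotPiece k I a →ₗ[k] quotPiece k I (a + 1) :=
  Submodule.mapQ (quotSub k I a) (quotSub k I (a + 1)) (homogMul k v a)
    (fun _ hx => I.mul_mem_left _ hx)

/-- The Castelnuovo–Mumford regularity `reg(S/I) = sup { j - i | β_{i,j}(S/I) ≠ 0 }` of the
quotient of the polynomial ring by a homogeneous ideal. -/
def regQuot (k : Type*) [Field k] {V : Type*} [Fintype V] [LinearOrder V]
    (I : Ideal (MvPolynomial V k)) : ℕ :=
  sSup {r | ∃ i, bettiAux k (quotPiece k I) (quotMul I) i (i + r) ≠ 0}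

/-! ### Graphs, path ideals and path induced matching numbers -/

/-- `l` is (the vertex list of) a `t`-path of `G`: `t` distinct vertices with consecutive
vertices adjacent. -/
def IsPathList {V : Type*} (G : SimpleGraph V) (t : ℕ) (l : List V) : Prop :=
  l.length = t ∧ l.Nodup ∧ l.Chain' G.Adj

/-- The `t`-path ideal `I_t(G)` of the graph `G`, generated by the monomials
`x_{u_1} ⋯ x_{u_t}` over all `t`-paths `u_1, …, u_t` of `G`. -/
def pathIdeal (k : Type*) [Field k] {V : Type*} (G : SimpleGraph V) (t : ℕ) :
    Ideal (MvPolynomial V k) :=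
  Ideal.span {f | ∃ l : List V, IsPathList G t l ∧ f = (l.map X).prod}

/-- A family of `t`-paths indexed by `Fin n` is a `t`-path induced matching of `G` if the
paths are pairwise vertex-disjoint and the only edges of `G` between vertices of the paths
are the edges of the paths. -/
def IsPathInducedMatching {V : Type*} (G : SimpleGraph V) (t : ℕ) {n : ℕ}
    (P : Fin n → List V) : Prop :=
  (∀ a, IsPathList G t (P a)) ∧
    (∀ a b, a ≠ b → ∀ x, x ∈ P a → x ∉ P b) ∧
    (∀ x y : V, (∃ a, x ∈ P a) → (∃ b, y ∈ P b) → G.Adj x y →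
      ∃ a, [x, y] <:+: P a ∨ [y, x] <:+: P a)

/-- The `t`-path induced matching number `ν_t(G)`: the largest size of a `t`-path induced
matching of `G`. -/
def pathNu {V : Type*} (G : SimpleGraph V) (t : ℕ) : ℕ :=
  sSup {n | ∃ P : Fin n → List V, IsPathInducedMatching G t P}

/-- The induced subgraph of `G` on a set `A` of vertices, viewed as a graph on the same
vertex set (all vertices outside `A` become isolated). -/
def inducedOn {V : Type*} (G : SimpleGraph V) (A : Set V) : SimpleGraph V where
  Adj x y := G.Adj x y ∧ x ∈ A ∧ y ∈ A
  symm := ⟨fun _ _ ⟨h, hx, hy⟩ => ⟨h.symm, hy, hx⟩⟩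
  loopless := ⟨fun x ⟨h, _, _⟩ => G.loopless.irrefl x h⟩

/-- The set of neighbors of a set of vertices. -/
def nbhd {V : Type*} (G : SimpleGraph V) (A : Set V) : Set V :=
  {y | ∃ x ∈ A, G.Adj x y}

/-- The closed neighborhood `N[A] = A ∪ N(A)` of a set of vertices. -/
def closedNbhd {V : Type*} (G : SimpleGraph V) (A : Set V) : Set V :=
  A ∪ nbhd G A

/-- A leaf of a graph is a vertex with a unique neighbor. -/
def IsLeaf {V : Type*} (G : SimpleGraph V) (x : V) : Prop :=
  ∃! y, G.Adj x y

/-- The level of a vertex `y`: its distance to the set of distinguished vertices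
(the cycle vertices, resp. the root in the tree case). -/
def levelTo {V : Type*} (G : SimpleGraph V) {m : ℕ} (v : Fin m → V) (y : V) : ℕ :=
  sInf {d | ∃ i, G.dist (v i) y = d}

/-- `v` lists the vertices of a cycle of `G` (in cyclic order). -/
def IsCycleOn {V : Type*} (G : SimpleGraph V) {m : ℕ} [NeZero m] (v : Fin m → V) : Prop :=
  Function.Injective v ∧ ∀ i : Fin m, G.Adj (v i) (v (i + 1))

/-- Every cycle of `G` has its vertices among `v 0, …, v (m-1)`; together with `IsCycleOn`
this says that the cycle on `v` is the unique cycle of `G`. -/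
def UniqueCycle {V : Type*} (G : SimpleGraph V) {m : ℕ} (v : Fin m → V) : Prop :=
  ∀ (x : V) (c : G.Walk x x), c.IsCycle → ∀ y ∈ c.support, y ∈ Set.range v

/-- `G` has at most one cycle: either `G` is a tree (and `m = 1`, `v 0` being a chosen root),
or `G` has the unique cycle `v 0, …, v (m-1)` of length `m ≥ 3`. -/
def AtMostOneCycle {V : Type*} (G : SimpleGraph V) {m : ℕ} [NeZero m] (v : Fin m → V) : Prop :=
  (m = 1 ∧ G.IsAcyclic) ∨ (3 ≤ m ∧ IsCycleOn G v ∧ UniqueCycle G v)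

/-- The graph `Γ_G(C)`: the induced subgraph of `G` obtained by deleting the boundary
`∂(C) = N(C) \ C` of the cycle with vertex set `Cset`. -/
def Gamma {V : Type*} (G : SimpleGraph V) (Cset : Set V) : SimpleGraph V :=
  inducedOn G (nbhd G Cset \ Cset)ᶜ

/-- A graph (containing the cycle with vertex set `Cset`) is `3`-proximal if
`ν_3(G) = ν_3(Γ_G(C))`. -/
def IsProximal3 {V : Type*} (G : SimpleGraph V) (Cset : Set V) : Prop :=
  pathNu G 3 = pathNu (Gamma G Cset) 3

section AuxNu
variable {W : Type*}

lemma mem_closedNbhd_left {G : SimpleGraph W} {S : Set W} {u : W} (h : u ∈ S) :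
    u ∈ closedNbhd G S := Or.inl h

lemma mem_closedNbhd_adj {G : SimpleGraph W} {S : Set W} {q u : W} (hq : q ∈ S)
    (h : G.Adj q u) : u ∈ closedNbhd G S := Or.inr ⟨q, hq, h⟩

lemma closedNbhd_cases {G : SimpleGraph W} {S : Set W} {u : W} (h : u ∈ closedNbhd G S) :
    u ∈ S ∨ ∃ q ∈ S, G.Adj q u := h

lemma triple_of_length_three {l : List W} (h : l.length = 3) :
    ∃ a b c : W, l = [a, b, c] := by
  match l, h with
  | [a, b, c], _ => exact ⟨a, b, c, rfl⟩

lemma isPathList3_iff {G : SimpleGraph W} {l : List W} :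
    IsPathList G 3 l ↔ ∃ a b c : W, l = [a, b, c] ∧ a ≠ b ∧ a ≠ c ∧ b ≠ c ∧
      G.Adj a b ∧ G.Adj b c := by
  constructor
  · rintro ⟨hl, hnd, hch⟩
    obtain ⟨a, b, c, rfl⟩ := triple_of_length_three hl
    simp only [List.nodup_cons, List.mem_cons, List.isChain_cons_cons, List.isChain_singleton,
      List.mem_singleton, List.not_mem_nil, or_false, not_or, List.nodup_nil, and_true, List.Chain'] at hnd hch
    exact ⟨a, b, c, rfl, hnd.1.1, hnd.1.2, hnd.2.1, hch.1, hch.2⟩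
  · rintro ⟨a, b, c, rfl, h1, h2, h3, h4, h5⟩
    exact ⟨rfl, by simp [h1, h2, h3], by simp [List.Chain', List.isChain_cons_cons, h4, h5]⟩

lemma mem_of_isPathList_inducedOn {G : SimpleGraph W} {B : Set W} {l : List W}
    (h : IsPathList (inducedOn G B) 3 l) : ∀ x ∈ l, x ∈ B := by
  obtain ⟨a, b, c, rfl, -, -, -, hab, hbc⟩ := isPathList3_iff.mp h
  intro x hx
  simp only [List.mem_cons, List.not_mem_nil, or_false, List.mem_singleton] at hx
  rcases hx with rfl | rfl | rfl
  exacts [hab.2.1, hab.2.2, hbc.2.2]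

lemma ipm_of_inducedOn {G : SimpleGraph W} {B : Set W} {n : ℕ} {P : Fin n → List W}
    (h : IsPathInducedMatching (inducedOn G B) 3 P) : IsPathInducedMatching G 3 P := by
  obtain ⟨h1, h2, h3⟩ := h
  refine ⟨fun a => ?_, h2, fun x y hx hy hadj => ?_⟩
  · obtain ⟨a', b', c', heq, n1, n2, n3, hab, hbc⟩ := isPathList3_iff.mp (h1 a)
    exact isPathList3_iff.mpr ⟨a', b', c', heq, n1, n2, n3, hab.1, hbc.1⟩
  · obtain ⟨a, hxa⟩ := hx
    obtain ⟨b, hyb⟩ := hy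
    exact h3 x y ⟨a, hxa⟩ ⟨b, hyb⟩
      ⟨hadj, mem_of_isPathList_inducedOn (h1 a) x hxa, mem_of_isPathList_inducedOn (h1 b) y hyb⟩

lemma ipm_inducedOn_of_subset {G : SimpleGraph W} {B : Set W} {n : ℕ} {P : Fin n → List W}
    (h : IsPathInducedMatching G 3 P) (hB : ∀ a, ∀ x ∈ P a, x ∈ B) :
    IsPathInducedMatching (inducedOn G B) 3 P := by
  obtain ⟨h1, h2, h3⟩ := h
  refine ⟨fun a => ?_, h2, fun x y hx hy hadj => h3 x y hx hy hadj.1⟩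
  obtain ⟨a', b', c', heq, n1, n2, n3, hab, hbc⟩ := isPathList3_iff.mp (h1 a)
  have ha' : a' ∈ B := hB a a' (heq ▸ by simp)
  have hb' : b' ∈ B := hB a b' (heq ▸ by simp)
  have hc' : c' ∈ B := hB a c' (heq ▸ by simp)
  exact isPathList3_iff.mpr ⟨a', b', c', heq, n1, n2, n3, ⟨hab, ha', hb'⟩, ⟨hbc, hb', hc'⟩⟩

lemma zero_mem_matchingSet (G : SimpleGraph W) :
    0 ∈ {n | ∃ P : Fin n → List W, IsPathInducedMatching G 3 P} :=
  ⟨Fin.elim0, fun a => a.elim0, fun a => a.elim0,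
    fun _ _ hx _ _ => by obtain ⟨a, -⟩ := hx; exact a.elim0⟩

lemma bddAbove_matchingSet [Fintype W] (G : SimpleGraph W) :
    BddAbove {n | ∃ P : Fin n → List W, IsPathInducedMatching G 3 P} := by
  refine ⟨Fintype.card W, ?_⟩
  rintro n ⟨P, hP⟩
  have hex : ∀ a : Fin n, ∃ x, x ∈ P a := fun a => by
    obtain ⟨x, b, c, heq, -, -, -, -, -⟩ := isPathList3_iff.mp (hP.1 a)
    exact ⟨x, heq ▸ by simp⟩
  choose f hf using hex
  have hinj : Function.Injective f := fun a b hab => by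
    by_contra hne
    exact hP.2.1 a b hne (f a) (hf a) (hab ▸ hf b)
  simpa using Fintype.card_le_of_injective f hinj

lemma ipm_remove {G : SimpleGraph W} {n : ℕ} {P : Fin (n + 1) → List W}
    (h : IsPathInducedMatching G 3 P) (a0 : Fin (n + 1)) {A : Set W}
    (hA : A ⊆ closedNbhd G {x | x ∈ P a0}) :
    IsPathInducedMatching (inducedOn G Aᶜ) 3 (fun i => P (a0.succAbove i)) := by
  have havoid : ∀ c : Fin (n + 1), c ≠ a0 → ∀ x ∈ P c, x ∈ Aᶜ := by
    intro c hc x hx hxA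
    rcases hA hxA with hQ | ⟨q, hq, hadj⟩
    · exact h.2.1 c a0 hc x hx hQ
    · obtain ⟨d, hd⟩ := h.2.2 q x ⟨a0, hq⟩ ⟨c, hx⟩ hadj
      have hqd : q ∈ P d ∧ x ∈ P d := by
        rcases hd with hd | hd
        · exact ⟨hd.subset (by simp), hd.subset (by simp)⟩
        · exact ⟨hd.subset (by simp), hd.subset (by simp)⟩
      have hda : d = a0 := by
        by_contra hne
        exact h.2.1 d a0 hne q hqd.1 hq
      exact h.2.1 c a0 hc x hx (hda ▸ hqd.2)
  have hsub : IsPathInducedMatching G 3 (fun i => P (a0.succAbove i)) := by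
    refine ⟨fun i => h.1 _, fun i j hij => h.2.1 _ _
      (fun e => hij (Fin.succAbove_right_injective e)), ?_⟩
    intro x y hx hy hadj
    obtain ⟨i, hxi⟩ := hx
    obtain ⟨j, hyj⟩ := hy
    obtain ⟨d, hd⟩ := h.2.2 x y ⟨_, hxi⟩ ⟨_, hyj⟩ hadj
    have hxd : x ∈ P d := by
      rcases hd with hd | hd
      exacts [hd.subset (by simp), hd.subset (by simp)]
    have hdne : d ≠ a0 := by
      rintro rfl
      exact h.2.1 _ d (Fin.succAbove_ne d i) x hxi hxd
    obtain ⟨i', hi'⟩ := Fin.exists_succAbove_eq hdne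
    refine ⟨i', ?_⟩
    show [x, y] <:+: P (a0.succAbove i') ∨ [y, x] <:+: P (a0.succAbove i')
    rw [hi']
    exact hd
  exact ipm_inducedOn_of_subset hsub (fun i => havoid _ (Fin.succAbove_ne a0 i))

lemma ipm_extend {G : SimpleGraph W} {A : Set W} {n : ℕ} {P : Fin n → List W}
    (h : IsPathInducedMatching (inducedOn G Aᶜ) 3 P)
    {q0 q1 q2 : W} (h01 : G.Adj q0 q1) (h12 : G.Adj q1 q2) (h02 : q0 ≠ q2)
    (hq02 : ¬ G.Adj q0 q2)
    (hqA : ∀ u : W, (u = q0 ∨ u = q1 ∨ u = q2 ∨ G.Adj q0 u ∨ G.Adj q1 u ∨ G.Adj q2 u) → u ∈ A) :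
    IsPathInducedMatching G 3 (Fin.cons [q0, q1, q2] P) := by
  have hG := ipm_of_inducedOn h
  have hmem : ∀ a, ∀ x ∈ P a, x ∈ Aᶜ := fun a => mem_of_isPathList_inducedOn (h.1 a)
  have hnewmem : ∀ x ∈ [q0, q1, q2], x ∈ A := by
    intro x hx
    simp only [List.mem_cons, List.not_mem_nil, or_false, List.mem_singleton] at hx
    rcases hx with rfl | rfl | rfl
    exacts [hqA _ (Or.inl rfl), hqA _ (Or.inr (Or.inl rfl)), hqA _ (Or.inr (Or.inr (Or.inl rfl)))]
  refine ⟨?_, ?_, ?_⟩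
  · intro a
    induction a using Fin.cases with
    | zero =>
      rw [Fin.cons_zero]
      exact isPathList3_iff.mpr ⟨q0, q1, q2, rfl, h01.ne, h02, h12.ne, h01, h12⟩
    | succ i => rw [Fin.cons_succ]; exact hG.1 i
  · intro a b hab x
    induction a using Fin.cases with
    | zero =>
      induction b using Fin.cases with
      | zero => exact absurd rfl hab
      | succ j =>
        rw [Fin.cons_zero, Fin.cons_succ]
        intro hx hx'
        exact hmem j x hx' (hnewmem x hx)
    | succ i =>
      induction b using Fin.cases with
      | zero =>
        rw [Fin.cons_zero, Fin.cons_succ]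
        intro hx hx'
        exact hmem i x hx (hnewmem x hx')
      | succ j =>
        rw [Fin.cons_succ, Fin.cons_succ]
        exact hG.2.1 i j (fun e => hab (e ▸ rfl)) x
  · intro x y hx hy hadj
    obtain ⟨a, hxa⟩ := hx
    obtain ⟨b, hyb⟩ := hy
    have hnew : ∀ u ∈ [q0, q1, q2], ∀ w, G.Adj u w →
        w ∈ A := by
      intro u hu w hw
      simp only [List.mem_cons, List.not_mem_nil, or_false, List.mem_singleton] at hu
      rcases hu with rfl | rfl | rfl
      exacts [hqA _ (Or.inr (Or.inr (Or.inr (Or.inl hw)))),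
        hqA _ (Or.inr (Or.inr (Or.inr (Or.inr (Or.inl hw))))),
        hqA _ (Or.inr (Or.inr (Or.inr (Or.inr (Or.inr hw)))))]
    induction a using Fin.cases with
    | zero =>
      rw [Fin.cons_zero] at hxa
      induction b using Fin.cases with
      | zero =>
        rw [Fin.cons_zero] at hyb
        refine ⟨0, ?_⟩
        rw [Fin.cons_zero]
        simp only [List.mem_cons, List.not_mem_nil, or_false, List.mem_singleton] at hxa hyb
        rcases hxa with rfl | rfl | rfl <;> rcases hyb with rfl | rfl | rfl
        · exact absurd hadj G.irrefl
        · exact Or.inl ⟨[], [q2], rfl⟩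
        · exact absurd hadj hq02
        · exact Or.inr ⟨[], [q2], rfl⟩
        · exact absurd hadj G.irrefl
        · exact Or.inl ⟨[q0], [], rfl⟩
        · exact absurd hadj.symm hq02
        · exact Or.inr ⟨[q0], [], rfl⟩
        · exact absurd hadj G.irrefl
      | succ j =>
        rw [Fin.cons_succ] at hyb
        exact absurd (hnew x hxa y hadj) (hmem j y hyb)
    | succ i =>
      rw [Fin.cons_succ] at hxa
      induction b using Fin.cases with
      | zero =>
        rw [Fin.cons_zero] at hyb
        exact absurd (hnew y hyb x hadj.symm) (hmem i x hxa)
      | succ j =>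
        rw [Fin.cons_succ] at hyb
        have hadj' : (inducedOn G Aᶜ).Adj x y := ⟨hadj, hmem i x hxa, hmem j y hyb⟩
        obtain ⟨c, hc⟩ := h.2.2 x y ⟨i, hxa⟩ ⟨j, hyb⟩ hadj'
        exact ⟨c.succ, by rw [Fin.cons_succ]; exact hc⟩


end AuxNu

/-- **Lemma (recursion for `ν_3`, leaf of level `≥ 2`).**
With the unicyclic/tree setup and `z_0` a leaf of highest level with `level(z_0) ≥ 2`,
write `N(y_0) = {z_0, z_1, …, z_s} ∪ {x_0}` where `y_0` is the unique neighbor of `z_0`,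
`z_1, …, z_s` are leaves, and `x_0` is the unique non-leaf neighbor of `y_0`.  Then
`ν_3(G) = max(ν_3(G_{z_0,1}), 1 + ν_3(G_{z_0,2}))` if `s ≥ 1`, and
`ν_3(G) = max(ν_3(G_{z_0,1}), 1 + ν_3(G_{z_0,3}))` if `s = 0`. -/
theorem pathNu_three_recursion_level_ge_two
    {V : Type*} [Fintype V] [LinearOrder V]
    (G : SimpleGraph V) (hconn : G.Connected)
    (m : ℕ) [NeZero m] (v : Fin m → V) (hcyc : AtMostOneCycle G v)
    (s : ℕ) (z : Fin (s + 1) → V) (hz : Function.Injective z) (y0 x0 : V)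
    (hzy : ∀ a, G.neighborSet (z a) = {y0})
    (hny : G.neighborSet y0 = Set.range z ∪ {x0})
    (hx0 : ¬ IsLeaf G x0)
    (hlevel : 2 ≤ levelTo G v (z 0))
    (hhigh : ∀ w, IsLeaf G w → levelTo G v w ≤ levelTo G v (z 0)) :
    (1 ≤ s →
      pathNu G 3 = max (pathNu (inducedOn G (Set.range z)ᶜ) 3)
        (1 + pathNu (inducedOn G (closedNbhd G {y0})ᶜ) 3)) ∧
    (s = 0 →
      pathNu G 3 = max (pathNu (inducedOn G (Set.range z)ᶜ) 3)
        (1 + pathNu (inducedOn G (closedNbhd G ({y0, x0} : Set V))ᶜ) 3)) := by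
  classical
  have Adjzy : ∀ a, G.Adj (z a) y0 := fun a => by
    have h : y0 ∈ G.neighborSet (z a) := by rw [hzy a]; rfl
    exact h
  have hzchar : ∀ a w, G.Adj (z a) w → w = y0 := fun a w hw => by
    have h : w ∈ G.neighborSet (z a) := hw
    rw [hzy a] at h; exact h
  have Adjyx : G.Adj y0 x0 := by
    have h : x0 ∈ G.neighborSet y0 := by rw [hny]; exact Or.inr rfl
    exact h
  have hychar : ∀ w, G.Adj y0 w → w ∈ Set.range z ∪ {x0} := fun w hw => by
    have h : w ∈ G.neighborSet y0 := hw
    rwa [hny] at h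
  have hzleaf : ∀ a, IsLeaf G (z a) := fun a => ⟨y0, Adjzy a, fun w hw => hzchar a w hw⟩
  have hzx : ∀ a, z a ≠ x0 := fun a e => hx0 (e ▸ hzleaf a)
  -- generic: ν₃ of an induced subgraph is at most ν₃(G)
  have hmono : ∀ B : Set V, pathNu (inducedOn G B) 3 ≤ pathNu G 3 := by
    intro B
    refine csSup_le_csSup (bddAbove_matchingSet G) ⟨0, zero_mem_matchingSet _⟩ ?_
    rintro n ⟨P, hP⟩
    exact ⟨P, ipm_of_inducedOn hP⟩
  -- generic extension inequality
  have hext : ∀ (A : Set V) (q0 q1 q2 : V), G.Adj q0 q1 → G.Adj q1 q2 → q0 ≠ q2 →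
      ¬ G.Adj q0 q2 →
      (∀ u : V, (u = q0 ∨ u = q1 ∨ u = q2 ∨ G.Adj q0 u ∨ G.Adj q1 u ∨ G.Adj q2 u) → u ∈ A) →
      1 + pathNu (inducedOn G Aᶜ) 3 ≤ pathNu G 3 := by
    intro A q0 q1 q2 h01 h12 h02 hq02 hqA
    obtain ⟨P, hP⟩ : ∃ P : Fin (pathNu (inducedOn G Aᶜ) 3) → List V,
        IsPathInducedMatching (inducedOn G Aᶜ) 3 P :=
      Nat.sSup_mem ⟨0, zero_mem_matchingSet _⟩ (bddAbove_matchingSet _)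
    have hext' := ipm_extend hP h01 h12 h02 hq02 hqA
    have hmem : pathNu (inducedOn G Aᶜ) 3 + 1 ∈
        {n | ∃ P : Fin n → List V, IsPathInducedMatching G 3 P} := ⟨_, hext'⟩
    have := le_csSup (bddAbove_matchingSet G) hmem
    rw [add_comm] at this
    exact this
  -- generic removal: from a matching containing y0 in some path
  have hrem : ∀ (A : Set V) (n : ℕ) (P : Fin (n + 1) → List V),
      IsPathInducedMatching G 3 P → ∀ a0 : Fin (n + 1),
      A ⊆ closedNbhd G {x | x ∈ P a0} →
      n + 1 ≤ 1 + pathNu (inducedOn G Aᶜ) 3 := by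
    intro A n P hP a0 hA
    have h := ipm_remove hP a0 hA
    have hmem : n ∈ {n | ∃ P : Fin n → List V,
        IsPathInducedMatching (inducedOn G Aᶜ) 3 P} := ⟨_, h⟩
    have h2 : n ≤ pathNu (inducedOn G Aᶜ) 3 := le_csSup (bddAbove_matchingSet _) hmem
    omega
  constructor
  · -- case s ≥ 1
    intro hs
    have h01 : (0 : Fin (s + 1)) ≠ 1 := by
      obtain ⟨s', rfl⟩ : ∃ s', s = s' + 1 := ⟨s - 1, by omega⟩
      exact zero_ne_one
    have hz01 : z 0 ≠ z 1 := fun e => h01 (hz e)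
    refine le_antisymm ?_ (max_le (hmono _) ?_)
    · refine csSup_le ⟨0, zero_mem_matchingSet G⟩ ?_
      rintro n ⟨P, hP⟩
      by_cases hcase : ∃ (a0 : Fin n) (a : Fin (s + 1)), z a ∈ P a0
      · obtain ⟨a0, a, hza⟩ := hcase
        obtain ⟨n, rfl⟩ : ∃ n', n = n' + 1 := by
          rcases n with _ | n'
          · exact a0.elim0
          · exact ⟨n', rfl⟩
        obtain ⟨u, vv, w, hQ, n1, n2, n3, huv, hvw⟩ := isPathList3_iff.mp (hP.1 a0)
        have hy0Q : y0 ∈ P a0 := by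
          have hza' : z a ∈ [u, vv, w] := hQ ▸ hza
          rw [hQ]
          simp only [List.mem_cons, List.not_mem_nil, or_false, List.mem_singleton] at hza' ⊢
          rcases hza' with he | he | he
          · exact Or.inr (Or.inl (hzchar a vv (he ▸ huv)).symm)
          · exfalso
            have h1 : u = y0 := hzchar a u (he ▸ huv.symm)
            have h2 : w = y0 := hzchar a w (he ▸ hvw)
            exact n2 (h1.trans h2.symm)
          · exact Or.inr (Or.inl (hzchar a vv (he ▸ hvw.symm)).symm)
        have hsub : closedNbhd G {y0} ⊆ closedNbhd G {x | x ∈ P a0} := by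
          intro u hu
          rcases closedNbhd_cases hu with hu | ⟨q, hq, hadj⟩
          · rw [Set.mem_singleton_iff] at hu
            rw [hu]
            exact mem_closedNbhd_left hy0Q
          · rw [Set.mem_singleton_iff] at hq
            rw [hq] at hadj
            exact mem_closedNbhd_adj (show y0 ∈ {x | x ∈ P a0} from hy0Q) hadj
        exact le_trans (hrem _ _ P hP a0 hsub) (le_max_right _ _)
      · push_neg at hcase
        have hres := ipm_inducedOn_of_subset (B := (Set.range z)ᶜ) hP (fun a x hx => by
          rintro ⟨b, rfl⟩
          exact hcase a b hx)
        exact le_trans (le_csSup (bddAbove_matchingSet _) ⟨P, hres⟩) (le_max_left _ _)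
    · refine hext _ (z 0) y0 (z 1) (Adjzy 0) (Adjzy 1).symm hz01 ?_ ?_
      · intro hadj
        exact (Adjzy 1).ne (hzchar 0 _ hadj)
      · rintro u (rfl | rfl | rfl | hadj | hadj | hadj)
        · exact mem_closedNbhd_adj (Set.mem_singleton _) (Adjzy 0).symm
        · exact mem_closedNbhd_left (Set.mem_singleton _)
        · exact mem_closedNbhd_adj (Set.mem_singleton _) (Adjzy 1).symm
        · exact (hzchar 0 _ hadj) ▸ mem_closedNbhd_left (Set.mem_singleton _)
        · exact mem_closedNbhd_adj (Set.mem_singleton _) hadj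
        · exact (hzchar 1 _ hadj) ▸ mem_closedNbhd_left (Set.mem_singleton _)
  · -- case s = 0
    rintro rfl
    refine le_antisymm ?_ (max_le (hmono _) ?_)
    · refine csSup_le ⟨0, zero_mem_matchingSet G⟩ ?_
      rintro n ⟨P, hP⟩
      by_cases hcase : ∃ (a0 : Fin n) (a : Fin 1), z a ∈ P a0
      · obtain ⟨a0, a, hza⟩ := hcase
        obtain ⟨n, rfl⟩ : ∃ n', n = n' + 1 := by
          rcases n with _ | n'
          · exact a0.elim0
          · exact ⟨n', rfl⟩
        obtain ⟨u, vv, w, hQ, n1, n2, n3, huv, hvw⟩ := isPathList3_iff.mp (hP.1 a0)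
        have hzez : ∀ b : Fin 1, z b = z a := fun b => by rw [Subsingleton.elim b a]
        have hkey : y0 ∈ [u, vv, w] ∧ x0 ∈ [u, vv, w] := by
          have hza' : z a ∈ [u, vv, w] := hQ ▸ hza
          simp only [List.mem_cons, List.not_mem_nil, or_false, List.mem_singleton]
            at hza' ⊢
          rcases hza' with he | he | he
          · have hv : vv = y0 := hzchar a vv (he ▸ huv)
            have hw : w ∈ Set.range z ∪ {x0} := hychar w (hv ▸ hvw)
            rcases hw with ⟨b, hb⟩ | hw
            · exfalso
              have hw' : w = z a := by rw [← hb, hzez b]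
              exact n2 (he.symm.trans hw'.symm)
            · exact ⟨Or.inr (Or.inl hv.symm), Or.inr (Or.inr hw.symm)⟩
          · exfalso
            have h1 : u = y0 := hzchar a u (he ▸ huv.symm)
            have h2 : w = y0 := hzchar a w (he ▸ hvw)
            exact n2 (h1.trans h2.symm)
          · have hv : vv = y0 := hzchar a vv (he ▸ hvw.symm)
            have hu : u ∈ Set.range z ∪ {x0} := hychar u (hv ▸ huv.symm)
            rcases hu with ⟨b, hb⟩ | hu
            · exfalso
              have hu' : u = z a := by rw [← hb, hzez b]
              exact n2 (hu'.trans he)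
            · exact ⟨Or.inr (Or.inl hv.symm), Or.inl hu.symm⟩
        have hy0Q : y0 ∈ P a0 := hQ ▸ hkey.1
        have hx0Q : x0 ∈ P a0 := hQ ▸ hkey.2
        have hsub : closedNbhd G ({y0, x0} : Set V) ⊆ closedNbhd G {x | x ∈ P a0} := by
          intro u hu
          rcases closedNbhd_cases hu with hu | ⟨q, hq, hadj⟩
          · simp only [Set.mem_insert_iff, Set.mem_singleton_iff] at hu
            rcases hu with hu | hu
            · rw [hu]
              exact mem_closedNbhd_left hy0Q
            · rw [hu]
              exact mem_closedNbhd_left hx0Q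
          · simp only [Set.mem_insert_iff, Set.mem_singleton_iff] at hq
            rcases hq with hq | hq
            · rw [hq] at hadj
              exact mem_closedNbhd_adj (show y0 ∈ {x | x ∈ P a0} from hy0Q) hadj
            · rw [hq] at hadj
              exact mem_closedNbhd_adj (show x0 ∈ {x | x ∈ P a0} from hx0Q) hadj
        exact le_trans (hrem _ _ P hP a0 hsub) (le_max_right _ _)
      · push_neg at hcase
        have hres := ipm_inducedOn_of_subset (B := (Set.range z)ᶜ) hP (fun a x hx => by
          rintro ⟨b, rfl⟩
          exact hcase a b hx)
        exact le_trans (le_csSup (bddAbove_matchingSet _) ⟨P, hres⟩) (le_max_left _ _)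
    · refine hext _ (z 0) y0 x0 (Adjzy 0) Adjyx (hzx 0) ?_ ?_
      · intro hadj
        exact Adjyx.ne (hzchar 0 _ hadj).symm
      · rintro u (rfl | rfl | rfl | hadj | hadj | hadj)
        · exact mem_closedNbhd_adj (Set.mem_insert _ _) (Adjzy 0).symm
        · exact mem_closedNbhd_left (Set.mem_insert _ _)
        · exact mem_closedNbhd_left (Set.mem_insert_of_mem _ rfl)
        · exact (hzchar 0 _ hadj) ▸ mem_closedNbhd_left (Set.mem_insert _ _)
        · exact mem_closedNbhd_adj (Set.mem_insert _ _) hadj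
        · exact mem_closedNbhd_adj (Set.mem_insert_of_mem _ rfl) hadj


end PathIdeals
end
end

section
/- Let P_m be the path graph on m vertices {1, …, m}. Then the 3-path induced matching number satisfies ν_3(P_m) = ⌊(m+1)/4⌋. -/
noncomputable section

namespace PathIdeals

open MvPolynomial

variable {k : Type*} [Field k] {V : Type*} [Fintype V] [LinearOrder V]

private lemma list_eq_triple {α : Type*} {l : List α} (h : l.length = 3) :
    ∃ x y z, l = [x, y, z] := by
  match l, h with
  | [x, y, z], _ => exact ⟨x, y, z, rfl⟩

/-- **Lemma (3-path induced matching number of paths).**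
Let `P_m` be the path graph on `m` vertices.  Then `ν_3(P_m) = ⌊(m+1)/4⌋`. -/
theorem pathNu_three_pathGraph (m : ℕ) :
    pathNu (SimpleGraph.pathGraph m) 3 = (m + 1) / 4 := by
  have hub : ∀ n ∈ {n : ℕ | ∃ P : Fin n → List (Fin m),
      IsPathInducedMatching (SimpleGraph.pathGraph m) 3 P}, n ≤ (m + 1) / 4 := by
    rintro n ⟨P, hpath, hdisj, hind⟩
    choose x y z hP using fun a => list_eq_triple (hpath a).1
    have hmx : ∀ a, x a ∈ P a := fun a => by rw [hP a]; simp
    have hmy : ∀ a, y a ∈ P a := fun a => by rw [hP a]; simp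
    have hmz : ∀ a, z a ∈ P a := fun a => by rw [hP a]; simp
    have hstruct : ∀ a, ((x a).1 + 1 = (y a).1 ∨ (y a).1 + 1 = (x a).1) ∧
        ((y a).1 + 1 = (z a).1 ∨ (z a).1 + 1 = (y a).1) ∧ (x a).1 ≠ (z a).1 := by
      intro a
      have hc := (hpath a).2.2
      have hn := (hpath a).2.1
      rw [hP a] at hc hn
      simp [List.Chain', List.isChain_cons_cons, SimpleGraph.pathGraph_adj] at hc
      simp [List.nodup_cons, Fin.ext_iff] at hn
      exact ⟨hc.1, hc.2, hn.1.2⟩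
    have hgap : ∀ a b, a ≠ b → ∀ u ∈ P a, ∀ w ∈ P b,
        u.1 ≠ w.1 ∧ u.1 + 1 ≠ w.1 ∧ w.1 + 1 ≠ u.1 := by
      intro a b hab u hu w hw
      have hne : u.1 ≠ w.1 := fun h => hdisj a b hab u hu ((Fin.ext h : u = w) ▸ hw)
      have hnadj : ¬ (SimpleGraph.pathGraph m).Adj u w := by
        intro h
        obtain ⟨c, hc⟩ := hind u w ⟨a, hu⟩ ⟨b, hw⟩ h
        have huc : u ∈ P c ∧ w ∈ P c := by
          rcases hc with h' | h'
          · exact ⟨h'.subset (by simp), h'.subset (by simp)⟩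
          · exact ⟨h'.subset (by simp), h'.subset (by simp)⟩
        have hac : a = c := by by_contra h'; exact hdisj a c h' u hu huc.1
        have hbc : b = c := by by_contra h'; exact hdisj b c h' w hw huc.2
        exact hab (hac.trans hbc.symm)
      rw [SimpleGraph.pathGraph_adj] at hnadj
      push_neg at hnadj
      exact ⟨hne, hnadj⟩
    have hmid : ∀ a b : Fin n, a ≠ b → (y a).1 + 4 ≤ (y b).1 ∨ (y b).1 + 4 ≤ (y a).1 := by
      intro a b hab
      have g1 := hgap a b hab (x a) (hmx a) (x b) (hmx b)
      have g2 := hgap a b hab (x a) (hmx a) (y b) (hmy b)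
      have g3 := hgap a b hab (x a) (hmx a) (z b) (hmz b)
      have g4 := hgap a b hab (y a) (hmy a) (x b) (hmx b)
      have g5 := hgap a b hab (y a) (hmy a) (y b) (hmy b)
      have g6 := hgap a b hab (y a) (hmy a) (z b) (hmz b)
      have g7 := hgap a b hab (z a) (hmz a) (x b) (hmx b)
      have g8 := hgap a b hab (z a) (hmz a) (y b) (hmy b)
      have g9 := hgap a b hab (z a) (hmz a) (z b) (hmz b)
      have s1 := hstruct a
      have s2 := hstruct b
      omega
    rcases Nat.eq_zero_or_pos n with h0 | h0
    · omega
    · have hm3 : ∀ a : Fin n, 1 ≤ (y a).1 ∧ (y a).1 + 2 ≤ m := by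
        intro a
        have s := hstruct a
        have h1 := (x a).isLt
        have h2 := (z a).isLt
        omega
      have hm : 3 ≤ m := by have := hm3 ⟨0, h0⟩; omega
      have hinj : Function.Injective (fun a : Fin n =>
          (⟨((y a).1 - 1) / 4, by have := hm3 a; omega⟩ : Fin ((m + 1) / 4))) := by
        intro a b hab
        by_contra hne
        have := hmid a b hne
        have ha := hm3 a
        have hb := hm3 b
        have hv : ((y a).1 - 1) / 4 = ((y b).1 - 1) / 4 := congrArg Fin.val hab
        omega
      have := Fintype.card_le_of_injective _ hinj
      simpa using this
  have hmem : (m + 1) / 4 ∈ {n : ℕ | ∃ P : Fin n → List (Fin m),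
      IsPathInducedMatching (SimpleGraph.pathGraph m) 3 P} := by
    refine ⟨fun a => [⟨4 * a.1, by have := a.2; omega⟩, ⟨4 * a.1 + 1, by have := a.2; omega⟩,
      ⟨4 * a.1 + 2, by have := a.2; omega⟩], ?_, ?_, ?_⟩
    · intro a
      refine ⟨rfl, ?_, ?_⟩
      · simp [List.nodup_cons, Fin.ext_iff]
      · simp [List.Chain', List.isChain_cons_cons, SimpleGraph.pathGraph_adj]
    · intro a b hab v hva hvb
      simp only [List.mem_cons, List.not_mem_nil, or_false, Fin.ext_iff] at hva hvb
      have : a.1 ≠ b.1 := fun h => hab (Fin.ext h)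
      omega
    · rintro v w ⟨a, hva⟩ ⟨b, hvb⟩ hadj
      rw [SimpleGraph.pathGraph_adj] at hadj
      simp only [List.mem_cons, List.not_mem_nil, or_false] at hva hvb
      have hvals : (v.1 = 4 * a.1 ∨ v.1 = 4 * a.1 + 1 ∨ v.1 = 4 * a.1 + 2) := by
        rcases hva with h | h | h <;> simp [h]
      have hwals : (w.1 = 4 * b.1 ∨ w.1 = 4 * b.1 + 1 ∨ w.1 = 4 * b.1 + 2) := by
        rcases hvb with h | h | h <;> simp [h]
      have hab : a = b := Fin.ext (by omega)
      subst hab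
      refine ⟨a, ?_⟩
      rcases hva with h1 | h1 | h1 <;> rcases hvb with h2 | h2 | h2 <;>
          subst h1 <;> subst h2 <;>
          first
          | (left; exact ⟨[], _, rfl⟩)
          | (left; exact ⟨[_], [], rfl⟩)
          | (right; exact ⟨[], _, rfl⟩)
          | (right; exact ⟨[_], [], rfl⟩)
          | (exfalso; simp only [Fin.val_mk] at hadj; omega)
  rw [pathNu]
  exact IsGreatest.csSup_eq ⟨hmem, hub⟩

end PathIdeals
end
end

section
/- Let G be a finite simple graph with a leaf z_0, and let y_0 be the unique neighbor of z_0. Then I_3(G) = z_0·y_0·(x : x ∈ N(y_0) \ {z_0}) + I_3(G_1), where G_1 = G \ {z_0} is the induced subgraph of G on V(G) \ {z_0}. -/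
noncomputable section

namespace PathIdeals

open MvPolynomial

variable {k : Type*} [Field k] {V : Type*} [Fintype V] [LinearOrder V]

/-- **Lemma (splitting off a leaf).**
Let `G` be a finite simple graph with a leaf `z_0`, and let `y_0` be the unique neighbor of
`z_0`.  Then `I_3(G) = z_0·y_0·(x : x ∈ N(y_0) \ {z_0}) + I_3(G_1)`, where
`G_1 = G \ {z_0}`. -/
theorem pathIdeal_three_eq_leaf_split
    (k : Type*) [Field k] {V : Type*}
    (G : SimpleGraph V) (z0 y0 : V) (hz : G.neighborSet z0 = {y0}) :
    pathIdeal k G 3 =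
      Ideal.span ((fun x => (X z0 * X y0 * X x : MvPolynomial V k)) ''
          (G.neighborSet y0 \ {z0})) +
        pathIdeal k (inducedOn G ({z0}ᶜ : Set V)) 3 := by
  have hadj : ∀ w, G.Adj z0 w ↔ w = y0 := fun w => by
    rw [← SimpleGraph.mem_neighborSet, hz, Set.mem_singleton_iff]
  apply le_antisymm
  · rw [pathIdeal, Ideal.span_le]
    rintro f ⟨l, ⟨hlen, hnd, hch⟩, rfl⟩
    obtain ⟨a, b, c, rfl⟩ : ∃ a b c, l = [a, b, c] := by
      match l, hlen with
      | [a, b, c], _ => exact ⟨a, b, c, rfl⟩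
    simp only [List.Chain', List.isChain_cons_cons, List.isChain_singleton, and_true] at hch
    obtain ⟨hab, hbc⟩ := hch
    have hnd' : a ≠ b ∧ a ≠ c ∧ b ≠ c := by
      simp only [List.nodup_cons, List.mem_cons, List.not_mem_nil, or_false,
        List.mem_singleton, not_or] at hnd
      tauto
    obtain ⟨hab', hac', hbc'⟩ := hnd'
    by_cases hza : z0 = a
    · subst hza
      have hb : b = y0 := (hadj b).mp hab
      subst hb
      refine Submodule.mem_sup_left (Ideal.subset_span ?_)
      refine ⟨c, ⟨hbc, fun h => hac' (Set.mem_singleton_iff.mp h).symm⟩, ?_⟩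
      simp [mul_assoc]
    · by_cases hzb : z0 = b
      · subst hzb
        have ha : a = y0 := (hadj a).mp hab.symm
        have hc : c = y0 := (hadj c).mp hbc
        exact absurd (ha.trans hc.symm) hac'
      · by_cases hzc : z0 = c
        · subst hzc
          have hb : b = y0 := (hadj b).mp hbc.symm
          subst hb
          refine Submodule.mem_sup_left (Ideal.subset_span ?_)
          refine ⟨a, ⟨hab.symm, fun h => hza (Set.mem_singleton_iff.mp h).symm⟩, ?_⟩
          simp only [List.map_cons, List.map_nil, List.prod_cons, List.prod_nil]
          ring
        · refine Submodule.mem_sup_right (Ideal.subset_span ?_)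
          refine ⟨[a, b, c], ⟨rfl, hnd, ?_⟩, rfl⟩
          refine List.isChain_cons_cons.mpr ⟨⟨hab, fun h => hza h.symm, fun h => hzb h.symm⟩,
            List.isChain_cons_cons.mpr ⟨⟨hbc, fun h => hzb h.symm, fun h => hzc h.symm⟩,
              List.isChain_singleton _⟩⟩
  · rw [Ideal.add_eq_sup, sup_le_iff]
    constructor
    · rw [Ideal.span_le]
      rintro f ⟨x, ⟨hxN, hxz⟩, rfl⟩
      have h1 : G.Adj z0 y0 := (hadj y0).mpr rfl
      have h2 : G.Adj y0 x := hxN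
      have hxz' : x ≠ z0 := fun h => hxz (Set.mem_singleton_iff.mpr h)
      refine Ideal.subset_span ⟨[z0, y0, x], ⟨rfl, ?_, ?_⟩, ?_⟩
      · simp [h1.ne, h2.ne, Ne.symm hxz']
      · exact List.isChain_cons_cons.mpr ⟨h1, List.isChain_cons_cons.mpr ⟨h2, List.isChain_singleton _⟩⟩
      · simp [mul_assoc]
    · rw [pathIdeal, Ideal.span_le]
      rintro f ⟨l, ⟨hlen, hnd, hch⟩, rfl⟩
      exact Ideal.subset_span ⟨l, ⟨hlen, hnd, List.IsChain.imp (fun a b h => h.1) hch⟩, rfl⟩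

end PathIdeals
end
end
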